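/- arXiv:1903.08625 — 3 statements merged into one kernel-verified Lean document; each statement's English description precedes it below -/
import Mathlib

section
/- Quasi Solovay reducibility is a preorder on the real numbers: for every real α one has α ≤_qS α, and for all reals α, β, γ, if α ≤_qS β and β ≤_qS γ then α ≤_qS γ. -/
open Filter Topology

/-- `a` is a computable nondecreasing sequence of rationals converging to the real `x`. -/
def CompApproxSeq (x : ℝ) (a : ℕ → ℚ) : Prop :=
  Computable a ∧ Monotone a ∧ Filter.Tendsto (fun n => (a n : ℝ)) Filter.atTop (nhds x)

/-- A real number is left-c.e. if it has a computable nondecreasing sequence of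
rationals converging to it (equivalently, its left cut is c.e.). -/
def LeftCE (x : ℝ) : Prop := ∃ a : ℕ → ℚ, CompApproxSeq x a

/-- Solovay reducibility: there are a partial computable `f : ℚ →. ℚ` and a positive
integer `d` such that for every rational `q < β`, `f q` is defined, `f q < α`, and
`α - f q < d * (β - q)`. -/
def SRed (α β : ℝ) : Prop :=
  ∃ f : ℚ →. ℚ, Partrec f ∧ ∃ d : ℕ, 0 < d ∧
    ∀ q : ℚ, (q : ℝ) < β → ∃ y ∈ f q, (y : ℝ) < α ∧ α - (y : ℝ) < (d : ℝ) * (β - (q : ℝ))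

/-- Quasi Solovay reducibility: there are a partial computable `f : ℚ →. ℚ` and positive
integers `d, l` such that for every rational `q < β`, `f q` is defined, `f q < α`, and
`(α - f q) ^ l < d * (β - q)`. -/
def QSRed (α β : ℝ) : Prop :=
  ∃ f : ℚ →. ℚ, Partrec f ∧ ∃ d l : ℕ, 0 < d ∧ 0 < l ∧
    ∀ q : ℚ, (q : ℝ) < β → ∃ y ∈ f q, (y : ℝ) < α ∧
      (α - (y : ℝ)) ^ l < (d : ℝ) * (β - (q : ℝ))

/-- Quasi Solovay reducibility is a preorder on the reals: it is reflexive and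
transitive. -/
theorem stmt1 :
    (∀ α : ℝ, QSRed α α) ∧ (∀ α β γ : ℝ, QSRed α β → QSRed β γ → QSRed α γ) := by
  constructor
  · intro α
    refine ⟨fun q => Part.some q, Computable.id.partrec, 2, 1, by norm_num, by norm_num, ?_⟩
    intro q hq
    refine ⟨q, Part.mem_some q, hq, ?_⟩
    have : (0:ℝ) < α - q := by linarith
    have h2 : (α - (q:ℝ)) ^ 1 < ((2:ℕ):ℝ) * (α - q) := by push_cast; linarith
    exact h2
  · rintro α β γ ⟨f, hf, d, l, hd, hl, hfs⟩ ⟨g, hg, e, m, he, hm, hgs⟩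
    refine ⟨fun q => (g q).bind f, hg.bind (hf.comp Computable.snd), d ^ m * e, l * m,
      Nat.mul_pos (Nat.pow_pos hd) he, Nat.mul_pos hl hm, ?_⟩
    intro q hq
    obtain ⟨y, hy, hyβ, hy2⟩ := hgs q hq
    obtain ⟨z, hz, hzα, hz2⟩ := hfs y hyβ
    refine ⟨z, Part.mem_bind_iff.mpr ⟨y, hy, hz⟩, hzα, ?_⟩
    have h1 : (0:ℝ) < α - z := by linarith
    have h2 : (0:ℝ) < β - y := by linarith
    have hdm : (0:ℝ) < (d:ℝ) := by exact_mod_cast hd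
    calc (α - (z:ℝ)) ^ (l * m) = ((α - z) ^ l) ^ m := by rw [pow_mul]
      _ < ((d:ℝ) * (β - y)) ^ m := by
          apply pow_lt_pow_left₀ hz2 (by positivity)
          omega
      _ = (d:ℝ) ^ m * (β - y) ^ m := by rw [mul_pow]
      _ < (d:ℝ) ^ m * ((e:ℝ) * (γ - q)) := by
          apply mul_lt_mul_of_pos_left hy2 (by positivity)
      _ = ((d ^ m * e : ℕ) : ℝ) * (γ - q) := by push_cast; ring
end

section
/- Let k be a natural number and let q = Σ_{i=1}^{2k} q_i·2^{-i}, where each q_i ∈ {0,1} and q_{2i} = 1 − q_{2i−1} for every i with 1 ≤ i ≤ k; extend the digits by setting q_i := 0 for all i > 2k. Let β be an irrational real with binary expansion β = Σ_{i≥1} b_i·2^{-i}, where each b_i ∈ {0,1} and b_{2i} = 1 − b_{2i−1} for every i ≥ 1. If q < β and β − q ≤ 2^{-(2m+1)} for a natural number m, then b_i = q_i for every i with 1 ≤ i ≤ 2m. -/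
noncomputable def tailT (d : ℕ → ℕ) (n : ℕ) : ℝ := ∑' i : ℕ, (d (n + 1 + i) : ℝ) / 2 ^ (n + 1 + i)

lemma aux_bd (d : ℕ → ℕ) (hd : ∀ i, d i ≤ 1) (n i : ℕ) :
    (d (n+1+i):ℝ)/2^(n+1+i) ≤ (1/2:ℝ)^(n+1) * (1/2)^i := by
  have h1 : (d (n+1+i) : ℝ) ≤ 1 := by exact_mod_cast hd _
  calc (d (n+1+i):ℝ)/2^(n+1+i) ≤ 1/2^(n+1+i) := by gcongr
    _ = (1/2:ℝ)^(n+1) * (1/2)^i := by rw [← pow_add, div_pow]; norm_num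

lemma aux_summable (d : ℕ → ℕ) (hd : ∀ i, d i ≤ 1) (n : ℕ) :
    Summable (fun i : ℕ => (d (n + 1 + i) : ℝ) / 2 ^ (n + 1 + i)) :=
  Summable.of_nonneg_of_le (fun i => by positivity) (fun i => aux_bd d hd n i)
    ((summable_geometric_of_lt_one (by norm_num) (by norm_num)).mul_left _)

lemma tailT_rec (d : ℕ → ℕ) (hd : ∀ i, d i ≤ 1) (n : ℕ) :
    tailT d n = (d (n+1) : ℝ)/2^(n+1) + tailT d (n+1) := by
  have e : ∑' (i:ℕ), ((d (n + 1 + (i+1)):ℝ) / 2 ^ (n + 1 + (i+1)))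
      = ∑' (i:ℕ), ((d (n+1+1+i):ℝ)/2^(n+1+1+i)) :=
    tsum_congr (fun i => by rw [show n+1+(i+1) = n+1+1+i from by omega])
  rw [tailT, Summable.tsum_eq_zero_add (aux_summable d hd n), e, tailT]

lemma tailT_nonneg (d : ℕ → ℕ) (n : ℕ) : 0 ≤ tailT d n :=
  tsum_nonneg (fun i => by positivity)

lemma tailT_le (d : ℕ → ℕ) (hd : ∀ i, d i ≤ 1) (n : ℕ) : tailT d n ≤ 1/2^n := by
  have h := Summable.tsum_le_tsum (fun i => aux_bd d hd n i) (aux_summable d hd n)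
    ((summable_geometric_of_lt_one (by norm_num) (by norm_num)).mul_left (a := (1/2:ℝ)^(n+1)))
  rw [tailT]
  refine h.trans (le_of_eq ?_)
  rw [tsum_mul_left, tsum_geometric_of_lt_one (by norm_num) (by norm_num), pow_succ]
  norm_num
  rw [div_pow]
  field_simp
  ring

lemma tailT_split (d : ℕ → ℕ) (hd : ∀ i, d i ≤ 1) (n : ℕ) :
    tailT d 0 = (∑ i ∈ Finset.Icc 1 n, (d i : ℝ)/2^i) + tailT d n := by
  induction n with
  | zero => simp
  | succ n ihn =>
      rw [ihn, tailT_rec d hd n, Finset.sum_Icc_succ_top (by omega)]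
      ring

lemma tailT_zero (d : ℕ → ℕ) (N n : ℕ) (hz : ∀ i, N < i → d i = 0) (hn : N ≤ n) :
    tailT d n = 0 := by
  rw [tailT]
  convert tsum_zero with i
  rw [hz (n+1+i) (by omega)]
  norm_num

lemma pair_ub (a c p : ℕ) (h : a + c ≤ 1) :
    (a:ℝ)/2^p + (c:ℝ)/2^(p+1) ≤ 1/2^p := by
  have : a = 0 ∧ c = 0 ∨ a = 1 ∧ c = 0 ∨ a = 0 ∧ c = 1 := by omega
  have hp : (0:ℝ) < 2^p := by positivity
  rcases this with ⟨h1,h2⟩|⟨h1,h2⟩|⟨h1,h2⟩ <;> subst h1 <;> subst h2 <;>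
    simp [pow_succ] <;> nlinarith

lemma pair_lb (a c p : ℕ) (h : a + c = 1) :
    1/2^(p+1) ≤ (a:ℝ)/2^p + (c:ℝ)/2^(p+1) := by
  have : a = 1 ∧ c = 0 ∨ a = 0 ∧ c = 1 := by omega
  have hp : (0:ℝ) < 2^p := by positivity
  rcases this with ⟨h1,h2⟩|⟨h1,h2⟩ <;> subst h1 <;> subst h2 <;>
    simp [pow_succ] <;> nlinarith

lemma pow_shift (p s : ℕ) : (1:ℝ)/2^(p+s) = (1/2^p) * (1/2^s) := by
  rw [pow_add]; ring

lemma pow_anti (p r : ℕ) (h : p ≤ r) : (1:ℝ)/2^r ≤ 1/2^p := by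
  gcongr
  norm_num

lemma key (k m : ℕ) (qd b : ℕ → ℕ) (hq01 : ∀ i, qd i ≤ 1) (hb01 : ∀ i, b i ≤ 1)
    (hqpair : ∀ i < k, qd (2*i+1) + qd (2*i+2) = 1)
    (hqzero : ∀ i, 2*k < i → qd i = 0)
    (hbpair : ∀ i : ℕ, b (2*i+1) + b (2*i+2) = 1)
    (β q : ℝ) (hβ0 : β = tailT b 0) (hq0 : q = tailT qd 0)
    (hlt : q < β) (hdist : β - q ≤ 1/2^(2*m+1))
    (j : ℕ) (hj1 : 1 ≤ j) (hj2 : j ≤ 2*m)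
    (hpref : ∀ i, 1 ≤ i → i < j → b i = qd i) : b j = qd j := by
  obtain ⟨n, rfl⟩ : ∃ n, j = n + 1 := ⟨j-1, by omega⟩
  have hsum_eq : ∑ i ∈ Finset.Icc 1 n, (b i:ℝ)/2^i = ∑ i ∈ Finset.Icc 1 n, (qd i:ℝ)/2^i :=
    Finset.sum_congr rfl (fun i hi => by
      rw [Finset.mem_Icc] at hi; rw [hpref i hi.1 (by omega)])
  have hdiff : β - q = tailT b n - tailT qd n := by
    rw [hβ0, hq0, tailT_split b hb01 n, tailT_split qd hq01 n, hsum_eq]; ring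
  have hpos : (0:ℝ) < 1/2^(2*m+1) := by positivity
  have pm : (1:ℝ)/2^(2*m+1) = (1/2^(2*m)) * (1/2) := by
    rw [pow_shift]; norm_num
  rcases Nat.even_or_odd n with ⟨t, ht⟩ | ⟨t, ht⟩
  · -- n = 2t, j = 2t+1 odd
    have hn2 : n = 2*t := by omega
    subst hn2
    have hbp := hbpair t
    by_contra hne
    have hrecb1 := tailT_rec b hb01 (2*t)
    have hrecb2 := tailT_rec b hb01 (2*t+1)
    have hrecq1 := tailT_rec qd hq01 (2*t)
    have hrecq2 := tailT_rec qd hq01 (2*t+1)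
    have e22 : 2*t+1+1 = 2*t+2 := by omega
    rw [e22] at hrecb2 hrecq2
    rcases lt_or_ge t k with htk | htk
    · have hqp := hqpair t htk
      have hcase : (b (2*t+1) = 1 ∧ qd (2*t+1) = 0 ∧ b (2*t+2) = 0 ∧ qd (2*t+2) = 1)
          ∨ (b (2*t+1) = 0 ∧ qd (2*t+1) = 1 ∧ b (2*t+2) = 1 ∧ qd (2*t+2) = 0) := by
        have h1 := hb01 (2*t+1); have h2 := hq01 (2*t+1)
        have h3 := hb01 (2*t+2); have h4 := hq01 (2*t+2)
        omega
      -- powers expressed in terms of x = 1/2^(2t+2)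
      have hx : (1:ℝ)/2^(2*m) ≤ 1/2^(2*t+2) := pow_anti _ _ (by omega)
      have p1 : (1:ℝ)/2^(2*t+1) = (1/2^(2*t+2)) * 2 := by
        rw [show 2*t+2 = (2*t+1)+1 from by omega, pow_shift]; ring
      have p3 : (1:ℝ)/2^(2*t+3) = (1/2^(2*t+2)) * (1/2) := by
        rw [show 2*t+3 = (2*t+2)+1 from by omega, pow_shift]; norm_num
      have p4 : (1:ℝ)/2^(2*t+4) = (1/2^(2*t+2)) * (1/4) := by
        rw [show 2*t+4 = (2*t+2)+2 from by omega, pow_shift]; norm_num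
      have p6 : (1:ℝ)/2^(2*t+6) = (1/2^(2*t+2)) * (1/16) := by
        rw [show 2*t+6 = (2*t+2)+4 from by omega, pow_shift]; norm_num
      rcases hcase with ⟨e1,e2,e3,e4⟩|⟨e1,e2,e3,e4⟩
      · -- lower bound case
        have hrecb3 := tailT_rec b hb01 (2*t+2)
        have hrecb4 := tailT_rec b hb01 (2*t+3)
        have hrecq3 := tailT_rec qd hq01 (2*t+2)
        have hrecq4 := tailT_rec qd hq01 (2*t+3)
        have e33 : 2*t+2+1 = 2*t+3 := by omega
        have e44 : 2*t+3+1 = 2*t+4 := by omega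
        rw [e33] at hrecb3 hrecq3
        rw [e44] at hrecb4 hrecq4
        have hrecb5 := tailT_rec b hb01 (2*t+4)
        have hrecb6 := tailT_rec b hb01 (2*t+5)
        have e55 : 2*t+4+1 = 2*t+5 := by omega
        have e66 : 2*t+5+1 = 2*t+6 := by omega
        rw [e55] at hrecb5
        rw [e66] at hrecb6
        have l1 : (1:ℝ)/2^(2*t+4) ≤ (b (2*t+3):ℝ)/2^(2*t+3) + (b (2*t+4):ℝ)/2^(2*t+4) := by
          have hp := hbpair (t+1)
          rw [show 2*(t+1)+1 = 2*t+3 from by omega, show 2*(t+1)+2 = 2*t+4 from by omega] at hp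
          have := pair_lb (b (2*t+3)) (b (2*t+4)) (2*t+3) hp
          rw [show 2*t+3+1 = 2*t+4 from by omega] at this
          exact this
        have l2 : (1:ℝ)/2^(2*t+6) ≤ (b (2*t+5):ℝ)/2^(2*t+5) + (b (2*t+6):ℝ)/2^(2*t+6) := by
          have hp := hbpair (t+2)
          rw [show 2*(t+2)+1 = 2*t+5 from by omega, show 2*(t+2)+2 = 2*t+6 from by omega] at hp
          have := pair_lb (b (2*t+5)) (b (2*t+6)) (2*t+5) hp
          rw [show 2*t+5+1 = 2*t+6 from by omega] at this
          exact this
        have u1 : qd (2*t+3) + qd (2*t+4) ≤ 1 := by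
          rcases lt_or_ge (t+1) k with h | h
          · have hp := hqpair (t+1) h
            rw [show 2*(t+1)+1 = 2*t+3 from by omega, show 2*(t+1)+2 = 2*t+4 from by omega] at hp
            omega
          · have z1 := hqzero (2*t+3) (by omega)
            have z2 := hqzero (2*t+4) (by omega)
            omega
        have uq : (qd (2*t+3):ℝ)/2^(2*t+3) + (qd (2*t+4):ℝ)/2^(2*t+4) ≤ 1/2^(2*t+3) := by
          have := pair_ub (qd (2*t+3)) (qd (2*t+4)) (2*t+3) u1
          rw [show 2*t+3+1 = 2*t+4 from by omega] at this
          exact this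
        have uq2 := tailT_le qd hq01 (2*t+4)
        have lb6 := tailT_nonneg b (2*t+6)
        simp only [e1, e2, e3, e4, Nat.cast_one, Nat.cast_zero, zero_div] at hrecb1 hrecb2 hrecq1 hrecq2
        linarith
      · -- upper bound ≤ 0 case
        have ub := tailT_le b hb01 (2*t+2)
        have nq := tailT_nonneg qd (2*t+2)
        simp only [e1, e2, e3, e4, Nat.cast_one, Nat.cast_zero, zero_div] at hrecb1 hrecb2 hrecq1 hrecq2
        linarith
    · -- t ≥ k
      have hz1 : qd (2*t+1) = 0 := hqzero _ (by omega)
      have hb1 : b (2*t+1) = 1 := by have := hb01 (2*t+1); omega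
      have hqt : tailT qd (2*t) = 0 := tailT_zero qd (2*k) (2*t) hqzero (by omega)
      have lb := tailT_nonneg b (2*t+1)
      have hx : (1:ℝ)/2^(2*m) ≤ 1/2^(2*t+1) := pow_anti _ _ (by omega)
      simp only [hb1, Nat.cast_one] at hrecb1
      linarith
  · -- n = 2t+1, j = 2t+2 even
    have hn2 : n = 2*t+1 := by omega
    subst hn2
    have e22 : 2*t+1+1 = 2*t+2 := by omega
    rw [e22]
    rcases lt_or_ge t k with htk | htk
    · have h1 := hpref (2*t+1) (by omega) (by omega)
      have h2 := hbpair t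
      have h3 := hqpair t htk
      omega
    · by_contra hne
      have hz1 : qd (2*t+2) = 0 := hqzero _ (by omega)
      have hb1 : b (2*t+2) = 1 := by have := hb01 (2*t+2); omega
      have hqt : tailT qd (2*t+1) = 0 := tailT_zero qd (2*k) (2*t+1) hqzero (by omega)
      have hrecb1 := tailT_rec b hb01 (2*t+1)
      rw [e22, hb1] at hrecb1
      have lb := tailT_nonneg b (2*t+2)
      have hx : (1:ℝ)/2^(2*m) ≤ 1/2^(2*t+2) := pow_anti _ _ (by omega)
      push_cast at hrecb1
      linarith


/-- Claim 1 of Lemma 3.3: if `q = Σ_{i=1}^{2k} qᵢ 2^{-i}` is a dyadic rational whose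
digit pairs satisfy `q_{2i} = 1 - q_{2i-1}`, and `β` is an irrational real whose binary
digits satisfy `b_{2i} = 1 - b_{2i-1}` for all `i ≥ 1`, then `q < β` and
`β - q ≤ 2^{-(2m+1)}` force the first `2m` digits of `β` and `q` to agree. -/
theorem stmt5 (k : ℕ) (qd : ℕ → ℕ) (hq01 : ∀ i, qd i ≤ 1)
    (hqpair : ∀ i < k, qd (2 * i + 1) + qd (2 * i + 2) = 1)
    (hqzero : ∀ i, 2 * k < i → qd i = 0)
    (b : ℕ → ℕ) (hb01 : ∀ i, b i ≤ 1)
    (hbpair : ∀ i : ℕ, b (2 * i + 1) + b (2 * i + 2) = 1)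
    (β : ℝ) (hβ : β = ∑' i : ℕ, (b (i + 1) : ℝ) / 2 ^ (i + 1))
    (hirr : Irrational β)
    (q : ℝ) (hq : q = ∑ i ∈ Finset.Icc 1 (2 * k), (qd i : ℝ) / 2 ^ i)
    (m : ℕ) (hlt : q < β) (hdist : β - q ≤ 1 / 2 ^ (2 * m + 1)) :
    ∀ i, 1 ≤ i → i ≤ 2 * m → b i = qd i := by

  have hβ0 : β = tailT b 0 := by
    rw [hβ, tailT]
    exact tsum_congr (fun i => by rw [show 0+1+i = i+1 from by omega])
  have hq0 : q = tailT qd 0 := by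
    rw [hq, tailT_split qd hq01 (2*k),
      tailT_zero qd (2*k) (2*k) hqzero (le_refl _)]
    ring
  intro i
  induction i using Nat.strong_induction_on with
  | _ i ih =>
    intro hi1 hi2
    exact key k m qd b hq01 hb01 hqpair hqzero hbpair β q hβ0 hq0 hlt hdist i hi1 hi2
      (fun i' h1 h2 => ih i' h2 h1 (by omega))
end

section
/- There exist left-c.e. real numbers α and β such that α ≤_qS β but not α ≤_S β. -/
open Filter Topology

namespace S8
open Encodable

def gstep : ℕ × ℕ → ℕ × ℕ := fun p => if p.1 = 0 then p else (p.2 % p.1, p.1)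

lemma gstep_iter : ∀ k x y, x ≤ k → gstep^[k] (x, y) = (0, Nat.gcd x y) := by
  intro k
  induction k with
  | zero => intro x y hx; interval_cases x; simp [Nat.gcd]
  | succ k ih =>
    intro x y hx
    rcases eq_or_ne x 0 with rfl | h0
    · rw [Function.iterate_succ_apply, show gstep (0, y) = (0, y) by simp [gstep]]
      simpa using ih 0 y (Nat.zero_le _)
    · rw [Function.iterate_succ_apply, show gstep (x, y) = (y % x, x) by simp [gstep, h0]]
      rw [ih (y % x) x (by
        have := Nat.mod_lt y (Nat.pos_of_ne_zero h0)
        omega)]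
      rw [Nat.gcd_rec x y]

def gcdC (a b : ℕ) : ℕ := (gstep^[a + 1] (a, b)).2

lemma gcdC_eq (a b : ℕ) : gcdC a b = Nat.gcd a b := by
  rw [gcdC, gstep_iter (a+1) a b (by omega)]

lemma gstep_prim : Primrec gstep :=
  Primrec.ite (Primrec.eq.comp Primrec.fst (Primrec.const 0)) Primrec.id
    (Primrec.pair (Primrec.nat_mod.comp Primrec.snd Primrec.fst) Primrec.fst)

lemma gcd_prim : Primrec₂ Nat.gcd := by
  have h : Primrec₂ gcdC := by
    have := Primrec.nat_iterate (α := ℕ × ℕ)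
      (f := fun p => p.1 + 1) (g := fun p => p) (h := fun _ q => gstep q)
      (Primrec.succ.comp Primrec.fst) Primrec.id (gstep_prim.comp Primrec.snd).to₂
    exact (Primrec.snd.comp this).to₂
  exact h.of_eq fun a b => gcdC_eq a b

lemma pow_prim : Primrec₂ ((· ^ ·) : ℕ → ℕ → ℕ) := Primrec₂.unpaired'.1 Nat.Primrec.pow

lemma countP_foldl (p : ℕ → Bool) : ∀ (l : List ℕ) (acc : ℕ),
    l.foldl (fun acc m => cond (p m) (acc + 1) acc) acc = acc + l.countP p := by
  intro l
  induction l with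
  | nil => simp
  | cons x l ih =>
    intro acc
    simp only [List.foldl_cons, List.countP_cons, ih]
    by_cases h : p x <;> simp [h] <;> omega

lemma countP_range_prim {p : ℕ → Bool} (hp : Primrec p) :
    Primrec fun c => (List.range c).countP p := by
  have : Primrec fun c => (List.range c).foldl (fun acc m => cond (p m) (acc + 1) acc) 0 := by
    have := Primrec.list_foldl (α := ℕ) (β := ℕ) (σ := ℕ)
      (f := List.range) (g := fun _ => 0)
      (h := fun _ sb => cond (p sb.2) (sb.1 + 1) sb.1)
      Primrec.list_range (Primrec.const 0)
      ((Primrec.cond (hp.comp (Primrec.snd.comp Primrec.snd))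
        (Primrec.succ.comp (Primrec.fst.comp Primrec.snd))
        (Primrec.fst.comp Primrec.snd)).to₂)
    exact this
  exact this.of_eq fun c => by rw [countP_foldl]; omega

/-! ### Encoding of ℚ -/

def encF : ℚ → ℕ := @Encodable.encode ℚ (Primcodable.ofDenumerable ℚ).toEncodable

lemma encF_computable : Computable encF := Computable.encode

def EO (q : ℚ) : ℕ := Nat.pair (Encodable.encode q.num) q.den

lemma EO_eq_old (q : ℚ) : @Encodable.encode ℚ Rat.instEncodable q = EO q := rfl

def iabs (x : ℕ) : ℕ := x / 2 + x % 2

lemma iabs_encode (n : ℤ) : iabs (Encodable.encode n) = n.natAbs := by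
  cases n with
  | ofNat k => show iabs (2 * k) = k; unfold iabs; omega
  | negSucc m => show iabs (2 * m + 1) = m + 1; unfold iabs; omega

lemma encode_int_neg_iff (n : ℤ) : (Encodable.encode n) % 2 = 1 ↔ n < 0 := by
  cases n with
  | ofNat k =>
    show (2 * k) % 2 = 1 ↔ (Int.ofNat k) < 0
    rw [Int.ofNat_eq_natCast]
    constructor
    · intro h; omega
    · intro h; omega
  | negSucc m =>
    show (2 * m + 1) % 2 = 1 ↔ _
    constructor
    · intro _; exact Int.negSucc_lt_zero m
    · intro _; omega

lemma encode_int_div2 (n : ℤ) (h : 0 ≤ n) : ((Encodable.encode n) / 2 : ℤ) = n := by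
  cases n with
  | ofNat k =>
    show ((2 * k : ℕ) / 2 : ℤ) = (Int.ofNat k)
    rw [Int.ofNat_eq_natCast]
    push_cast
    omega
  | negSucc m => exact absurd h (by simp)

def valid (m : ℕ) : Bool :=
  decide (0 < m.unpair.2) && (Nat.gcd (iabs m.unpair.1) m.unpair.2 == 1)

lemma valid_prim : Primrec valid := by
  have h1 : Primrec fun m : ℕ => decide (0 < m.unpair.2) :=
    Primrec.nat_lt.decide.comp (Primrec.const 0) (Primrec.snd.comp Primrec.unpair)
  have h2 : Primrec fun m : ℕ => (Nat.gcd (iabs m.unpair.1) m.unpair.2 == 1) := by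
    have hiabs : Primrec iabs :=
      Primrec.nat_add.comp (Primrec.nat_div.comp Primrec.id (Primrec.const 2))
        (Primrec.nat_mod.comp Primrec.id (Primrec.const 2))
    exact Primrec.beq.comp
      (gcd_prim.comp (hiabs.comp (Primrec.fst.comp Primrec.unpair))
        (Primrec.snd.comp Primrec.unpair)) (Primrec.const 1)
  exact (Primrec.dom_bool₂ (· && ·)).comp h1 h2

lemma valid_iff_mem (m : ℕ) :
    valid m = true ↔ m ∈ Set.range (@Encodable.encode ℚ Rat.instEncodable) := by
  constructor
  · intro h
    simp only [valid, Bool.and_eq_true, decide_eq_true_eq, beq_iff_eq] at h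
    set x := m.unpair.1 with hx
    set d := m.unpair.2 with hd
    let z : ℤ := Equiv.intEquivNat.symm x
    have hzx : Encodable.encode z = x := Equiv.apply_symm_apply Equiv.intEquivNat x
    have habs : z.natAbs.Coprime d := by
      have : iabs x = z.natAbs := by rw [← hzx, iabs_encode]
      rw [Nat.Coprime, ← this]
      exact h.2
    refine ⟨⟨z, d, by omega, habs⟩, ?_⟩
    rw [EO_eq_old]
    show Nat.pair (Encodable.encode z) d = m
    rw [hzx, hx, hd]
    exact Nat.pair_unpair m
  · rintro ⟨q, rfl⟩
    rw [EO_eq_old]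
    simp only [valid, EO, Nat.unpair_pair, Bool.and_eq_true, decide_eq_true_eq, beq_iff_eq]
    exact ⟨q.pos, by rw [iabs_encode]; exact q.reduced⟩

def rank (c : ℕ) : ℕ := (List.range c).countP valid

lemma rank_prim : Primrec rank := countP_range_prim valid_prim

lemma encF_eq (q : ℚ) : encF q = rank (EO q) := by
  have h0 : encF q =
      (List.range (@encode ℚ Rat.instEncodable q)).countP
        (fun m => @decide (m ∈ Set.range (@encode ℚ Rat.instEncodable))
          (@Encodable.decidableRangeEncode ℚ Rat.instEncodable m)) := rfl
  rw [h0, EO_eq_old, rank]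
  apply List.countP_congr
  intro m _
  rw [Bool.eq_iff_iff]
  simp only [decide_eq_true_eq, iff_true]
  exact (valid_iff_mem m).symm

lemma rank_strict {m m' : ℕ} (hm : valid m = true) (h : m < m') : rank m < rank m' := by
  have h1 : (List.range m).countP valid + 1 = (List.range (m+1)).countP valid := by
    rw [List.range_succ, List.countP_append]
    simp [List.countP_cons, hm]
  have h2 : (List.range (m+1)).countP valid ≤ (List.range m').countP valid :=
    List.Sublist.countP_le (List.range_sublist.2 (by omega))
  show (List.range m).countP valid < (List.range m').countP valid
  omega

lemma valid_inj {m m' : ℕ} (hm : valid m = true) (hm' : valid m' = true)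
    (h : rank m = rank m') : m = m' := by
  rcases lt_trichotomy m m' with hlt | heq | hgt
  · exact absurd h (Nat.ne_of_lt (rank_strict hm hlt))
  · exact heq
  · exact absurd h.symm (Nat.ne_of_lt (rank_strict hm' hgt))

lemma valid_EO (q : ℚ) : valid (EO q) = true :=
  (valid_iff_mem (EO q)).2 ⟨q, EO_eq_old q⟩

def decPart : ℕ →. ℕ := fun k => Nat.rfind fun m => Part.some (valid m && (rank m == k))

lemma EO_mem_decPart (q : ℚ) : EO q ∈ decPart (encF q) := by
  rw [decPart]; apply Nat.mem_rfind.2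
  constructor
  · simp only [Part.mem_some_iff]
    rw [Bool.eq_iff_iff]
    simp [valid_EO q, (encF_eq q).symm]
  · intro m hm
    simp only [Part.mem_some_iff]
    rw [Bool.eq_iff_iff]
    simp only [Bool.and_eq_true, beq_iff_eq]
    constructor
    · intro h; simp at h
    · rintro ⟨hv, hr⟩
      exact absurd (valid_inj hv (valid_EO q) (by rw [hr, encF_eq])) (Nat.ne_of_lt hm)

lemma decPart_partrec : Partrec decPart := by
  apply Partrec.rfind
  have hc : Computable₂ fun (k m : ℕ) => (valid m && (rank m == k)) := by
    have : Primrec₂ fun (k m : ℕ) => (valid m && (rank m == k)) :=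
      (Primrec.dom_bool₂ (· && ·)).comp (valid_prim.comp Primrec.snd)
        (Primrec.beq.comp (rank_prim.comp Primrec.snd) Primrec.fst)
    exact this.to_comp
  exact (hc.partrec₂).of_eq fun n => rfl

lemma EO_computable : Computable EO := by
  have h1 : Partrec fun q : ℚ => decPart (encF q) := decPart_partrec.comp encF_computable
  exact h1.of_eq_tot fun q => EO_mem_decPart q

/-! ### comparison booleans -/

def ltb (q : ℚ) (N L : ℕ) : Bool :=
  ((EO q).unpair.1 % 2 == 1) || decide ((EO q).unpair.1 / 2 * 2 ^ L < N * (EO q).unpair.2)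

def leb (q : ℚ) (N L : ℕ) : Bool :=
  ((EO q).unpair.1 % 2 == 1) || decide ((EO q).unpair.1 / 2 * 2 ^ L ≤ N * (EO q).unpair.2)

lemma EO_fst (q : ℚ) : (EO q).unpair.1 = Encodable.encode q.num := by simp [EO]
lemma EO_snd (q : ℚ) : (EO q).unpair.2 = q.den := by simp [EO]

lemma rat_lt_iff (q : ℚ) (N L : ℕ) : q < (N : ℚ) / 2 ^ L ↔ q.num * 2 ^ L < N * q.den := by
  conv_lhs => rw [← Rat.num_div_den q]
  rw [div_lt_div_iff₀ (by exact_mod_cast q.pos) (by positivity)]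
  constructor
  · intro h; exact_mod_cast h
  · intro h; exact_mod_cast h

lemma rat_le_iff (q : ℚ) (N L : ℕ) : q ≤ (N : ℚ) / 2 ^ L ↔ q.num * 2 ^ L ≤ N * q.den := by
  conv_lhs => rw [← Rat.num_div_den q]
  rw [div_le_div_iff₀ (by exact_mod_cast q.pos) (by positivity)]
  constructor
  · intro h; exact_mod_cast h
  · intro h; exact_mod_cast h

lemma ltb_iff (q : ℚ) (N L : ℕ) (hN : 0 < N) : ltb q N L = true ↔ q < (N : ℚ) / 2 ^ L := by
  rw [rat_lt_iff, ltb, EO_fst, EO_snd]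
  rcases lt_or_ge q.num 0 with hneg | hpos
  · have h1 : Encodable.encode q.num % 2 = 1 := (encode_int_neg_iff _).2 hneg
    simp only [h1, beq_self_eq_true, Bool.true_or, true_iff]
    have h2 : q.num * 2 ^ L < 0 := mul_neg_of_neg_of_pos hneg (by positivity)
    have h3 : (0 : ℤ) ≤ N * q.den := by positivity
    omega
  · have h1 : ¬ (Encodable.encode q.num % 2 = 1) := fun h => absurd ((encode_int_neg_iff _).1 h) (not_lt.2 hpos)
    have h2 : ((Encodable.encode q.num / 2 : ℕ) : ℤ) = q.num := encode_int_div2 _ hpos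
    simp only [Bool.or_eq_true, beq_iff_eq, decide_eq_true_eq, h1, false_or]
    constructor
    · intro h
      have h3 := (Nat.cast_lt (α := ℤ)).2 h
      rw [Nat.cast_mul, Nat.cast_mul, Nat.cast_pow, h2] at h3
      exact_mod_cast h3
    · intro h
      have : ((Encodable.encode q.num / 2 : ℕ) : ℤ) * 2 ^ L < (N : ℤ) * q.den := by
        rw [h2]; exact_mod_cast h
      exact_mod_cast this

lemma leb_iff (q : ℚ) (N L : ℕ) : leb q N L = true ↔ q ≤ (N : ℚ) / 2 ^ L := by
  rw [rat_le_iff, leb, EO_fst, EO_snd]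
  rcases lt_or_ge q.num 0 with hneg | hpos
  · have h1 : Encodable.encode q.num % 2 = 1 := (encode_int_neg_iff _).2 hneg
    simp only [h1, beq_self_eq_true, Bool.true_or, true_iff]
    have h2 : q.num * 2 ^ L < 0 := mul_neg_of_neg_of_pos hneg (by positivity)
    have h3 : (0 : ℤ) ≤ N * q.den := by positivity
    omega
  · have h1 : ¬ (Encodable.encode q.num % 2 = 1) := fun h => absurd ((encode_int_neg_iff _).1 h) (not_lt.2 hpos)
    have h2 : ((Encodable.encode q.num / 2 : ℕ) : ℤ) = q.num := encode_int_div2 _ hpos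
    simp only [Bool.or_eq_true, beq_iff_eq, decide_eq_true_eq, h1, false_or]
    constructor
    · intro h
      have h3 := (Nat.cast_le (α := ℤ)).2 h
      rw [Nat.cast_mul, Nat.cast_mul, Nat.cast_pow, h2] at h3
      exact_mod_cast h3
    · intro h
      have : ((Encodable.encode q.num / 2 : ℕ) : ℤ) * 2 ^ L ≤ (N : ℤ) * q.den := by
        rw [h2]; exact_mod_cast h
      exact_mod_cast this


/-! ### stages -/

open Nat.Partrec (Code)

def hB (s c : ℕ) : Bool := (Nat.Partrec.Code.evaln s (Denumerable.ofNat Code c) 0).isSome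

lemma hB_mono {s t c : ℕ} (h : s ≤ t) (hs : hB s c = true) : hB t c = true := by
  unfold hB at *
  rw [Option.isSome_iff_exists] at *
  obtain ⟨x, hx⟩ := hs
  exact ⟨x, Nat.Partrec.Code.evaln_mono h hx⟩

lemma hB_prim : Primrec₂ hB := by
  have h1 := Nat.Partrec.Code.primrec_evaln
  have h2 : Primrec fun p : ℕ × ℕ => Nat.Partrec.Code.evaln p.1 (Denumerable.ofNat Code p.2) 0 :=
    h1.comp (Primrec.pair (Primrec.pair Primrec.fst ((Primrec.ofNat Code).comp Primrec.snd))
      (Primrec.const 0))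
  exact (Primrec.option_isSome.comp h2).to₂

def u (s n : ℕ) : Bool :=
  decide (n < 2*s+2) && ((n % 2 == 1) || (decide (2 ≤ n) && hB s (n/2 - 1)))

lemma u_prim : Primrec₂ u := by
  have hand := Primrec.dom_bool₂ (· && ·)
  have hor := Primrec.dom_bool₂ (· || ·)
  have c1 : Primrec fun p : ℕ × ℕ => decide (p.2 < 2*p.1+2) :=
    Primrec.nat_lt.decide.comp Primrec.snd
      (Primrec.succ.comp <| Primrec.succ.comp <|
        Primrec.nat_mul.comp (Primrec.const 2) Primrec.fst)
  have c2 : Primrec fun p : ℕ × ℕ => (p.2 % 2 == 1) :=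
    Primrec.beq.comp (Primrec.nat_mod.comp Primrec.snd (Primrec.const 2)) (Primrec.const 1)
  have c3 : Primrec fun p : ℕ × ℕ => decide (2 ≤ p.2) :=
    Primrec.nat_le.decide.comp (Primrec.const 2) Primrec.snd
  have c4 : Primrec fun p : ℕ × ℕ => hB p.1 (p.2/2 - 1) :=
    hB_prim.comp Primrec.fst
      (Primrec.nat_sub.comp (Primrec.nat_div.comp Primrec.snd (Primrec.const 2)) (Primrec.const 1))
  exact (hand.comp c1 (hor.comp c2 (hand.comp c3 c4))).to₂

lemma u_mono {s t n : ℕ} (h : s ≤ t) (hs : u s n = true) : u t n = true := by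
  unfold u at *
  simp only [Bool.and_eq_true, Bool.or_eq_true, decide_eq_true_eq] at *
  obtain ⟨h1, h2⟩ := hs
  refine ⟨by omega, ?_⟩
  rcases h2 with h2 | ⟨h3, h4⟩
  · exact Or.inl h2
  · exact Or.inr ⟨h3, hB_mono h h4⟩

def Us (s : ℕ) : Finset ℕ := (Finset.range (2*s+2)).filter fun n => u s n = true

lemma mem_Us {s n : ℕ} : n ∈ Us s ↔ u s n = true := by
  constructor
  · intro h; exact (Finset.mem_filter.1 h).2
  · intro h
    refine Finset.mem_filter.2 ⟨Finset.mem_range.2 ?_, h⟩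
    have := h
    unfold u at this
    simp only [Bool.and_eq_true, decide_eq_true_eq] at this
    exact this.1

lemma Us_mono {s t : ℕ} (h : s ≤ t) : Us s ⊆ Us t := fun n hn =>
  mem_Us.2 (u_mono h (mem_Us.1 hn))

lemma Us_le {s n : ℕ} (h : n ∈ Us s) : n ≤ 2*s+1 := by
  have := mem_Us.1 h
  unfold u at this
  simp only [Bool.and_eq_true, decide_eq_true_eq] at this
  omega

lemma odd_mem (s : ℕ) : 2*s+1 ∈ Us s := by
  rw [mem_Us]
  unfold u
  simp only [Bool.and_eq_true, Bool.or_eq_true, decide_eq_true_eq, beq_iff_eq]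
  omega

lemma fresh_mem (s : ℕ) : 2*s+3 ∈ Us (s+1) := by
  rw [mem_Us]
  unfold u
  simp only [Bool.and_eq_true, Bool.or_eq_true, decide_eq_true_eq, beq_iff_eq]
  omega

lemma fresh_not_mem (s : ℕ) : 2*s+3 ∉ Us s := fun h => by have := Us_le h; omega

/-! ### the rational approximations -/

def av (s : ℕ) : ℚ := ∑ n ∈ Us s, (1/2 : ℚ)^n
def bv (s : ℕ) : ℚ := ∑ n ∈ Us s, (1/4 : ℚ)^n
def A (s : ℕ) : ℕ := ∑ n ∈ Us s, 2^(2*s+1-n)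
def B (s : ℕ) : ℕ := ∑ n ∈ Us s, 2^(4*s+2-2*n)

lemma half_pow_mul {n m : ℕ} (h : n ≤ m) : ((1/2 : ℚ))^n * 2^m = 2^(m-n) := by
  have h1 : (2:ℚ)^m = 2^(m-n) * 2^n := by rw [← pow_add, Nat.sub_add_cancel h]
  rw [h1, div_pow, one_pow]
  field_simp

lemma quarter_pow_mul {n m : ℕ} (h : 2*n ≤ m) : ((1/4 : ℚ))^n * 2^m = 2^(m-2*n) := by
  have h4 : ((1/4 : ℚ))^n = ((1/2 : ℚ))^(2*n) := by
    rw [pow_mul]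
    norm_num
  rw [h4, half_pow_mul h]

lemma av_eq (s : ℕ) : av s = (A s : ℚ) / 2^(2*s+1) := by
  rw [eq_div_iff (by positivity), av, Finset.sum_mul, A, Nat.cast_sum]
  apply Finset.sum_congr rfl
  intro n hn
  rw [half_pow_mul (Us_le hn), Nat.cast_pow]
  norm_num

lemma bv_eq (s : ℕ) : bv s = (B s : ℚ) / 2^(4*s+2) := by
  rw [eq_div_iff (by positivity), bv, Finset.sum_mul, B, Nat.cast_sum]
  apply Finset.sum_congr rfl
  intro n hn
  rw [quarter_pow_mul (by have := Us_le hn; omega), Nat.cast_pow]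
  norm_num

lemma A_odd (s : ℕ) : A s % 2 = 1 := by
  rw [A, ← Finset.sum_erase_add _ _ (odd_mem s)]
  have h1 : 2 ∣ ∑ n ∈ (Us s).erase (2*s+1), 2^(2*s+1-n) := by
    apply Finset.dvd_sum
    intro n hn
    have h2 : n ≠ 2*s+1 := (Finset.mem_erase.1 hn).1
    have h3 : n ≤ 2*s+1 := Us_le (Finset.mem_erase.1 hn).2
    exact dvd_pow_self 2 (by omega)
  have h4 : 2^(2*s+1-(2*s+1)) = 1 := by simp
  omega

lemma B_odd (s : ℕ) : B s % 2 = 1 := by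
  rw [B, ← Finset.sum_erase_add _ _ (odd_mem s)]
  have h1 : 2 ∣ ∑ n ∈ (Us s).erase (2*s+1), 2^(4*s+2-2*n) := by
    apply Finset.dvd_sum
    intro n hn
    have h2 : n ≠ 2*s+1 := (Finset.mem_erase.1 hn).1
    have h3 : n ≤ 2*s+1 := Us_le (Finset.mem_erase.1 hn).2
    exact dvd_pow_self 2 (by omega)
  have h4 : 2^(4*s+2-2*(2*s+1)) = 1 := by rw [show 4*s+2-2*(2*s+1) = 0 by omega, pow_zero]
  omega

lemma num_den_div (N L : ℕ) (hodd : N % 2 = 1) :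
    ((N : ℚ)/2^L).num = N ∧ ((N : ℚ)/2^L).den = 2^L := by
  have hco : Nat.Coprime N (2^L) := by
    apply Nat.Coprime.pow_right
    rw [Nat.coprime_two_right, Nat.odd_iff]
    exact hodd
  have hq : ((N : ℚ)/2^L) = Rat.mk' (N : ℤ) (2^L) (by positivity) (by simpa using hco) := by
    set q' : ℚ := Rat.mk' (N : ℤ) (2^L) (by positivity) (by simpa using hco) with hq'
    rw [← Rat.num_div_den q']
    have h1 : q'.num = (N : ℤ) := rfl
    have h2 : q'.den = 2^L := rfl
    rw [h1, h2]
    push_cast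
    ring
  rw [hq]
  exact ⟨rfl, rfl⟩


lemma foldl_sum (g : ℕ → ℕ) : ∀ (k : ℕ) (acc : ℕ),
    (List.range k).foldl (fun acc n => acc + g n) acc = acc + ∑ n ∈ Finset.range k, g n := by
  intro k
  induction k with
  | zero => simp
  | succ k ih =>
    intro acc
    rw [List.range_succ, List.foldl_append, Finset.sum_range_succ, ih]
    simp only [List.foldl_cons, List.foldl_nil]
    omega

lemma sum_eq_range (s : ℕ) (g : ℕ → ℕ) :
    (∑ n ∈ Us s, g n) = ∑ n ∈ Finset.range (2*s+2), cond (u s n) (g n) 0 := by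
  rw [Us, Finset.sum_filter]
  apply Finset.sum_congr rfl
  intro n _
  by_cases h : u s n = true <;> simp [h]

lemma sum_primrec {g : ℕ → ℕ → ℕ} (hg : Primrec₂ g) :
    Primrec fun s => ∑ n ∈ Finset.range (2*s+2), cond (u s n) (g s n) 0 := by
  have h1 : Primrec fun s =>
      (List.range (2*s+2)).foldl (fun acc n => acc + cond (u s n) (g s n) 0) 0 := by
    have := Primrec.list_foldl (α := ℕ) (β := ℕ) (σ := ℕ)
      (f := fun s => List.range (2*s+2)) (g := fun _ => 0)
      (h := fun s x => x.1 + cond (u s x.2) (g s x.2) 0)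
      (Primrec.list_range.comp (Primrec.succ.comp <| Primrec.succ.comp <|
        Primrec.nat_mul.comp (Primrec.const 2) Primrec.id))
      (Primrec.const 0) ?_
    · exact this
    · exact (Primrec.nat_add.comp (Primrec.fst.comp Primrec.snd)
        (Primrec.cond (u_prim.comp Primrec.fst (Primrec.snd.comp Primrec.snd))
          (hg.comp Primrec.fst (Primrec.snd.comp Primrec.snd)) (Primrec.const 0))).to₂
  exact h1.of_eq fun s => by rw [foldl_sum]; omega

lemma A_prim : Primrec A := by
  have h := sum_primrec (g := fun s n => 2^(2*s+1-n))
    (pow_prim.comp (Primrec.const 2)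
      (Primrec.nat_sub.comp
        (Primrec.succ.comp <| Primrec.nat_mul.comp (Primrec.const 2) Primrec.fst)
        Primrec.snd)).to₂
  exact h.of_eq fun s => (sum_eq_range s _).symm

lemma enc_natcast (k : ℕ) : Encodable.encode ((k : ℤ)) = 2*k := rfl

lemma encF_av (s : ℕ) : encF (av s) = rank (Nat.pair (2 * A s) (2^(2*s+1))) := by
  rw [encF_eq, EO]
  obtain ⟨hn, hd⟩ := num_den_div (A s) (2*s+1) (A_odd s)
  rw [av_eq s, hn, hd, enc_natcast]

lemma av_primrec : Primrec av := by
  apply Primrec.encode_iff.1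
  have h1 : Primrec fun s => rank (Nat.pair (2 * A s) (2^(2*s+1))) :=
    rank_prim.comp (Primrec₂.natPair.comp
      (Primrec.nat_mul.comp (Primrec.const 2) A_prim)
      (pow_prim.comp (Primrec.const 2)
        (Primrec.succ.comp <| Primrec.nat_mul.comp (Primrec.const 2) Primrec.id)))
  exact h1.of_eq fun s => ((encF_av s).symm : _)



def inW (n : ℕ) : Prop := ∃ s, n ∈ Us s

noncomputable def avR (s : ℕ) : ℝ := ((av s : ℚ) : ℝ)
noncomputable def bvR (s : ℕ) : ℝ := ((bv s : ℚ) : ℝ)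

lemma av_mono : Monotone av := by
  intro s t h
  exact Finset.sum_le_sum_of_subset_of_nonneg (Us_mono h) (fun n _ _ => by positivity)

lemma bv_mono : Monotone bv := by
  intro s t h
  exact Finset.sum_le_sum_of_subset_of_nonneg (Us_mono h) (fun n _ _ => by positivity)

lemma sum_range_pow_le {c : ℚ} (h0 : 0 ≤ c) (h1 : c ≤ 1/2) :
    ∀ k, ∑ i ∈ Finset.range k, c^i ≤ 2 - 2*c^k := by
  intro k
  induction k with
  | zero => simp
  | succ k ih =>
    rw [Finset.sum_range_succ]
    have hck : c^(k+1) ≤ c^k * (1/2) := by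
      rw [pow_succ]
      apply mul_le_mul_of_nonneg_left h1 (pow_nonneg h0 k)
    nlinarith [pow_nonneg h0 k]

lemma sum_pow_le {c : ℚ} (h0 : 0 ≤ c) (h1 : c ≤ 1/2) (T : Finset ℕ) :
    ∑ n ∈ T, c^n ≤ 2 := by
  have hT : T ⊆ Finset.range (T.sup id + 1) := by
    intro n hn
    exact Finset.mem_range.2 (Nat.lt_succ_of_le (Finset.le_sup (f := id) hn))
  calc ∑ n ∈ T, c^n ≤ ∑ n ∈ Finset.range (T.sup id + 1), c^n :=
        Finset.sum_le_sum_of_subset_of_nonneg hT (fun n _ _ => by positivity)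
    _ ≤ 2 - 2*c^(T.sup id + 1) := sum_range_pow_le h0 h1 _
    _ ≤ 2 := by nlinarith [pow_nonneg h0 (T.sup id + 1)]

lemma sum_pow_le' {c : ℚ} (h0 : 0 ≤ c) (h1 : c ≤ 1/2) (T : Finset ℕ) (m : ℕ)
    (hT : ∀ n ∈ T, m ≤ n) : ∑ n ∈ T, c^n ≤ 2 * c^m := by
  have h2 : ∑ n ∈ T, c^n = c^m * ∑ n ∈ T, c^(n - m) := by
    rw [Finset.mul_sum]
    apply Finset.sum_congr rfl
    intro n hn
    rw [← pow_add, show m + (n - m) = n by have := hT n hn; omega]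
  rw [h2]
  have h3 : ∑ n ∈ T, c^(n - m) ≤ 2 := by
    have hinj : ∀ x ∈ T, ∀ y ∈ T, x - m = y - m → x = y := by
      intro x hx y hy hxy
      have := hT x hx
      have := hT y hy
      omega
    calc ∑ n ∈ T, c^(n-m) = ∑ j ∈ T.image (· - m), c^j := (Finset.sum_image hinj).symm
      _ ≤ 2 := sum_pow_le h0 h1 _
  calc c^m * ∑ n ∈ T, c^(n-m) ≤ c^m * 2 :=
        mul_le_mul_of_nonneg_left h3 (by positivity)
    _ = 2 * c^m := by ring

lemma av_le_two (s : ℕ) : av s ≤ 2 := sum_pow_le (by norm_num) (by norm_num) _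
lemma bv_le_two (s : ℕ) : bv s ≤ 2 := sum_pow_le (by norm_num) (by norm_num) _

lemma bddA : BddAbove (Set.range avR) := by
  refine ⟨2, ?_⟩
  rintro x ⟨s, rfl⟩
  have := av_le_two s
  unfold avR
  exact_mod_cast this

lemma bddB : BddAbove (Set.range bvR) := by
  refine ⟨2, ?_⟩
  rintro x ⟨s, rfl⟩
  have := bv_le_two s
  unfold bvR
  exact_mod_cast this

noncomputable def alphaR : ℝ := ⨆ s, avR s
noncomputable def betaR : ℝ := ⨆ s, bvR s

lemma le_alpha (s : ℕ) : avR s ≤ alphaR := le_ciSup bddA s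
lemma le_beta (s : ℕ) : bvR s ≤ betaR := le_ciSup bddB s
lemma alpha_le {x : ℝ} (h : ∀ s, avR s ≤ x) : alphaR ≤ x := ciSup_le h
lemma beta_le {x : ℝ} (h : ∀ s, bvR s ≤ x) : betaR ≤ x := ciSup_le h

lemma avR_mono : Monotone avR := fun s t h => by
  unfold avR; exact_mod_cast av_mono h
lemma bvR_mono : Monotone bvR := fun s t h => by
  unfold bvR; exact_mod_cast bv_mono h

lemma tendsto_av : Filter.Tendsto (fun s => ((av s : ℚ) : ℝ)) Filter.atTop (nhds alphaR) :=
  tendsto_atTop_ciSup avR_mono bddA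

lemma tendsto_bv : Filter.Tendsto (fun s => ((bv s : ℚ) : ℝ)) Filter.atTop (nhds betaR) :=
  tendsto_atTop_ciSup bvR_mono bddB

lemma exists_not_mem (s : ℕ) : ∃ n, inW n ∧ n ∉ Us s :=
  ⟨2*s+3, ⟨s+1, fresh_mem s⟩, fresh_not_mem s⟩

open Classical in
noncomputable def mfun (s : ℕ) : ℕ := Nat.find (exists_not_mem s)

lemma mfun_spec (s : ℕ) : inW (mfun s) ∧ mfun s ∉ Us s := by
  classical
  exact Nat.find_spec (exists_not_mem s)

lemma mfun_min {s n : ℕ} (h : inW n) (h2 : n ∉ Us s) : mfun s ≤ n := by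
  classical
  exact Nat.find_min' (exists_not_mem s) ⟨h, h2⟩

lemma diff_av {s t : ℕ} (h : s ≤ t) : av t - av s = ∑ n ∈ Us t \ Us s, (1/2:ℚ)^n := by
  have h2 := Finset.sum_sdiff (f := fun n => (1/2:ℚ)^n) (Us_mono h)
  unfold av
  linarith

lemma diff_bv {s t : ℕ} (h : s ≤ t) : bv t - bv s = ∑ n ∈ Us t \ Us s, (1/4:ℚ)^n := by
  have h2 := Finset.sum_sdiff (f := fun n => (1/4:ℚ)^n) (Us_mono h)
  unfold bv
  linarith

lemma sdiff_ge (s t : ℕ) : ∀ n ∈ Us t \ Us s, mfun s ≤ n := by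
  intro n hn
  rw [Finset.mem_sdiff] at hn
  exact mfun_min ⟨t, hn.1⟩ hn.2

lemma av_diff_le {s t : ℕ} (h : s ≤ t) : av t - av s ≤ 2 * (1/2:ℚ)^(mfun s) := by
  rw [diff_av h]
  exact sum_pow_le' (by norm_num) (by norm_num) _ _ (sdiff_ge s t)

lemma bv_diff_le {s t : ℕ} (h : s ≤ t) : bv t - bv s ≤ 2 * (1/4:ℚ)^(mfun s) := by
  rw [diff_bv h]
  exact sum_pow_le' (by norm_num) (by norm_num) _ _ (sdiff_ge s t)

lemma alpha_sub_le (s : ℕ) : alphaR - avR s ≤ 2 * (1/2:ℝ)^(mfun s) := by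
  rw [sub_le_iff_le_add]
  apply alpha_le
  intro t
  rcases le_total t s with h | h
  · have h2 : avR t ≤ avR s := avR_mono h
    have : (0:ℝ) < 2 * (1/2:ℝ)^(mfun s) := by positivity
    linarith
  · have h2 := av_diff_le h
    have h3 := (Rat.cast_le (K := ℝ)).2 h2
    push_cast at h3
    unfold avR
    linarith

lemma beta_sub_le (s : ℕ) : betaR - bvR s ≤ 2 * (1/4:ℝ)^(mfun s) := by
  rw [sub_le_iff_le_add]
  apply beta_le
  intro t
  rcases le_total t s with h | h
  · have h2 : bvR t ≤ bvR s := bvR_mono h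
    have : (0:ℝ) < 2 * (1/4:ℝ)^(mfun s) := by positivity
    linarith
  · have h2 := bv_diff_le h
    have h3 := (Rat.cast_le (K := ℝ)).2 h2
    push_cast at h3
    unfold bvR
    linarith

lemma single_le_diff {s t n : ℕ} (h : s ≤ t) (hn : n ∈ Us t) (hn2 : n ∉ Us s) :
    (1/2:ℚ)^n ≤ av t - av s := by
  rw [diff_av h]
  exact Finset.single_le_sum (f := fun n => (1/2:ℚ)^n) (fun i _ => by positivity)
    (Finset.mem_sdiff.2 ⟨hn, hn2⟩)

lemma single_le_diff_b {s t n : ℕ} (h : s ≤ t) (hn : n ∈ Us t) (hn2 : n ∉ Us s) :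
    (1/4:ℚ)^n ≤ bv t - bv s := by
  rw [diff_bv h]
  exact Finset.single_le_sum (f := fun n => (1/4:ℚ)^n) (fun i _ => by positivity)
    (Finset.mem_sdiff.2 ⟨hn, hn2⟩)

lemma alpha_sub_ge {s n : ℕ} (hW : inW n) (hn : n ∉ Us s) :
    (1/2:ℝ)^n ≤ alphaR - avR s := by
  obtain ⟨t0, ht0⟩ := hW
  have hmem : n ∈ Us (max s t0) := Us_mono (le_max_right s t0) ht0
  have h1 := single_le_diff (le_max_left s t0) hmem hn
  have h2 := (Rat.cast_le (K := ℝ)).2 h1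
  push_cast at h2
  have h3 := le_alpha (max s t0)
  unfold avR at *
  linarith

lemma beta_sub_ge {s n : ℕ} (hW : inW n) (hn : n ∉ Us s) :
    (1/4:ℝ)^n ≤ betaR - bvR s := by
  obtain ⟨t0, ht0⟩ := hW
  have hmem : n ∈ Us (max s t0) := Us_mono (le_max_right s t0) ht0
  have h1 := single_le_diff_b (le_max_left s t0) hmem hn
  have h2 := (Rat.cast_le (K := ℝ)).2 h1
  push_cast at h2
  have h3 := le_beta (max s t0)
  unfold bvR at *
  linarith

lemma alpha_sub_ge_m (s : ℕ) : (1/2:ℝ)^(mfun s) ≤ alphaR - avR s :=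
  alpha_sub_ge (mfun_spec s).1 (mfun_spec s).2

lemma beta_sub_ge_m (s : ℕ) : (1/4:ℝ)^(mfun s) ≤ betaR - bvR s :=
  beta_sub_ge (mfun_spec s).1 (mfun_spec s).2

lemma av_lt_alpha (s : ℕ) : avR s < alphaR := by
  have h1 := alpha_sub_ge (n := 2*s+3) ⟨s+1, fresh_mem s⟩ (fresh_not_mem s)
  have : (0:ℝ) < (1/2:ℝ)^(2*s+3) := by positivity
  linarith

lemma bv_lt_beta (s : ℕ) : bvR s < betaR := by
  have h1 := beta_sub_ge (n := 2*s+3) ⟨s+1, fresh_mem s⟩ (fresh_not_mem s)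
  have : (0:ℝ) < (1/4:ℝ)^(2*s+3) := by positivity
  linarith

lemma exists_bv_gt {q : ℚ} (h : (q:ℝ) < betaR) : ∃ s, q < bv s := by
  by_contra hc
  push_neg at hc
  have : betaR ≤ (q:ℝ) := beta_le fun s => by
    have := hc s
    unfold bvR
    exact_mod_cast this
  linarith

lemma sq_half : ((1/2:ℝ)^(m : ℕ))^2 = (1/4:ℝ)^m := by
  rw [← pow_mul, mul_comm, pow_mul]
  norm_num

lemma key_qs (s : ℕ) : (alphaR - avR s)^2 ≤ 4 * (betaR - bvR s) := by
  have h1 := alpha_sub_le s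
  have h2 := beta_sub_ge_m s
  have h0 : (0:ℝ) ≤ alphaR - avR s := by have := le_alpha s; linarith
  have h3 : (alphaR - avR s)^2 ≤ (2 * (1/2:ℝ)^(mfun s))^2 := by
    apply pow_le_pow_left₀ h0 h1
  have h4 : (2 * (1/2:ℝ)^(mfun s))^2 = 4 * (1/4:ℝ)^(mfun s) := by
    rw [mul_pow, sq_half]; norm_num
  nlinarith
  
lemma key_s (s : ℕ) : betaR - bvR s ≤ 2 * (alphaR - avR s)^2 := by
  have h1 := beta_sub_le s
  have h2 := alpha_sub_ge_m s
  have h0 : (0:ℝ) ≤ (1/2:ℝ)^(mfun s) := by positivity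
  have h3 : (1/4:ℝ)^(mfun s) ≤ (alphaR - avR s)^2 := by
    rw [← sq_half]
    exact pow_le_pow_left₀ h0 h2 2
  nlinarith

/-! ### B-side computability -/

lemma B_pos (s : ℕ) : 0 < B s := by have := B_odd s; omega
lemma A_pos (s : ℕ) : 0 < A s := by have := A_odd s; omega

lemma B_prim : Primrec B := by
  have h := sum_primrec (g := fun s n => 2^(4*s+2-2*n))
    (pow_prim.comp (Primrec.const 2)
      (Primrec.nat_sub.comp
        (Primrec.succ.comp <| Primrec.succ.comp <|
          Primrec.nat_mul.comp (Primrec.const 4) Primrec.fst)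
        (Primrec.nat_mul.comp (Primrec.const 2) Primrec.snd))).to₂
  exact h.of_eq fun s => (sum_eq_range s _).symm

lemma encF_bv (s : ℕ) : encF (bv s) = rank (Nat.pair (2 * B s) (2^(4*s+2))) := by
  rw [encF_eq, EO]
  obtain ⟨hn, hd⟩ := num_den_div (B s) (4*s+2) (B_odd s)
  rw [bv_eq s, hn, hd, enc_natcast]

lemma bv_primrec : Primrec bv := by
  apply Primrec.encode_iff.1
  have h1 : Primrec fun s => rank (Nat.pair (2 * B s) (2^(4*s+2))) :=
    rank_prim.comp (Primrec₂.natPair.comp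
      (Primrec.nat_mul.comp (Primrec.const 2) B_prim)
      (pow_prim.comp (Primrec.const 2)
        (Primrec.succ.comp <| Primrec.succ.comp <|
          Primrec.nat_mul.comp (Primrec.const 4) Primrec.id)))
  exact h1.of_eq fun s => ((encF_bv s).symm : _)

/-! ### computable comparison helpers -/

def Glt (x : ℕ × ℕ × ℕ) : Bool :=
  (x.1.unpair.1 % 2 == 1) || decide (x.1.unpair.1 / 2 * 2 ^ x.2.2 < x.2.1 * x.1.unpair.2)

def Gle (x : ℕ × ℕ × ℕ) : Bool :=
  (x.1.unpair.1 % 2 == 1) || decide (x.1.unpair.1 / 2 * 2 ^ x.2.2 ≤ x.2.1 * x.1.unpair.2)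

lemma ltb_eq_G (q : ℚ) (N L : ℕ) : ltb q N L = Glt (EO q, N, L) := rfl
lemma leb_eq_G (q : ℚ) (N L : ℕ) : leb q N L = Gle (EO q, N, L) := rfl

lemma Glt_prim : Primrec Glt := by
  have u1 : Primrec fun x : ℕ × ℕ × ℕ => x.1.unpair.1 :=
    Primrec.fst.comp (Primrec.unpair.comp Primrec.fst)
  have u2 : Primrec fun x : ℕ × ℕ × ℕ => x.1.unpair.2 :=
    Primrec.snd.comp (Primrec.unpair.comp Primrec.fst)
  have c1 : Primrec fun x : ℕ × ℕ × ℕ => (x.1.unpair.1 % 2 == 1) :=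
    Primrec.beq.comp (Primrec.nat_mod.comp u1 (Primrec.const 2)) (Primrec.const 1)
  have c2 : Primrec fun x : ℕ × ℕ × ℕ =>
      decide (x.1.unpair.1 / 2 * 2 ^ x.2.2 < x.2.1 * x.1.unpair.2) :=
    Primrec.nat_lt.decide.comp
      (Primrec.nat_mul.comp (Primrec.nat_div.comp u1 (Primrec.const 2))
        (pow_prim.comp (Primrec.const 2) (Primrec.snd.comp Primrec.snd)))
      (Primrec.nat_mul.comp (Primrec.fst.comp Primrec.snd) u2)
  exact (Primrec.dom_bool₂ (· || ·)).comp c1 c2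

lemma Gle_prim : Primrec Gle := by
  have u1 : Primrec fun x : ℕ × ℕ × ℕ => x.1.unpair.1 :=
    Primrec.fst.comp (Primrec.unpair.comp Primrec.fst)
  have u2 : Primrec fun x : ℕ × ℕ × ℕ => x.1.unpair.2 :=
    Primrec.snd.comp (Primrec.unpair.comp Primrec.fst)
  have c1 : Primrec fun x : ℕ × ℕ × ℕ => (x.1.unpair.1 % 2 == 1) :=
    Primrec.beq.comp (Primrec.nat_mod.comp u1 (Primrec.const 2)) (Primrec.const 1)
  have c2 : Primrec fun x : ℕ × ℕ × ℕ =>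
      decide (x.1.unpair.1 / 2 * 2 ^ x.2.2 ≤ x.2.1 * x.1.unpair.2) :=
    Primrec.nat_le.decide.comp
      (Primrec.nat_mul.comp (Primrec.nat_div.comp u1 (Primrec.const 2))
        (pow_prim.comp (Primrec.const 2) (Primrec.snd.comp Primrec.snd)))
      (Primrec.nat_mul.comp (Primrec.fst.comp Primrec.snd) u2)
  exact (Primrec.dom_bool₂ (· || ·)).comp c1 c2

lemma ltb_bv_computable : Computable fun x : ℚ × ℕ => ltb x.1 (B x.2) (4*x.2+2) := by
  have h1 : Computable fun x : ℚ × ℕ => Glt (EO x.1, B x.2, 4*x.2+2) :=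
    (Glt_prim.to_comp).comp
      ((EO_computable.comp Computable.fst).pair
        (((B_prim.to_comp).comp Computable.snd).pair
          ((Primrec.succ.comp <| Primrec.succ.comp <|
            Primrec.nat_mul.comp (Primrec.const 4) Primrec.id).to_comp.comp Computable.snd)))
  exact h1.of_eq fun x => (ltb_eq_G _ _ _).symm

lemma leb_av_computable : Computable fun x : (ℕ × ℚ) × ℕ => leb x.1.2 (A x.2) (2*x.2+1) := by
  have h1 : Computable fun x : (ℕ × ℚ) × ℕ => Gle (EO x.1.2, A x.2, 2*x.2+1) :=
    (Gle_prim.to_comp).comp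
      ((EO_computable.comp (Computable.snd.comp Computable.fst)).pair
        (((A_prim.to_comp).comp Computable.snd).pair
          ((Primrec.succ.comp <|
            Primrec.nat_mul.comp (Primrec.const 2) Primrec.id).to_comp.comp Computable.snd)))
  exact h1.of_eq fun x => (leb_eq_G _ _ _).symm

lemma ltb_bv_iff (q : ℚ) (s : ℕ) : ltb q (B s) (4*s+2) = true ↔ q < bv s := by
  rw [ltb_iff _ _ _ (B_pos s), bv_eq]

lemma leb_av_iff (q : ℚ) (t : ℕ) : leb q (A t) (2*t+1) = true ↔ q ≤ av t := by
  rw [leb_iff, av_eq]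

/-! ### the quasi-Solovay reduction -/

def QS : ℚ →. ℚ :=
  fun q => (Nat.rfind fun s => Part.some (ltb q (B s) (4*s+2))).map av

lemma QS_partrec : Partrec QS := by
  have hp : Partrec₂ fun (q : ℚ) (s : ℕ) => (Part.some (ltb q (B s) (4*s+2)) : Part Bool) := by
    have := (ltb_bv_computable.to₂).partrec₂
    exact this.of_eq fun x => rfl
  exact (Partrec.rfind hp).map ((av_primrec.to_comp.comp Computable.snd).to₂)

lemma QS_spec {q : ℚ} (hq : (q : ℝ) < betaR) :
    ∃ y ∈ QS q, (y : ℝ) < alphaR ∧ (alphaR - (y:ℝ))^2 < (5:ℝ) * (betaR - (q:ℝ)) := by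
  have hex : ∃ s, (fun s => ltb q (B s) (4*s+2)) s = true := by
    obtain ⟨s, hs⟩ := exists_bv_gt hq
    exact ⟨s, (ltb_bv_iff q s).2 hs⟩
  have hdom : (Nat.rfind fun s => Part.some (ltb q (B s) (4*s+2))).Dom := by
    apply Nat.rfind_dom.2
    obtain ⟨s, hs⟩ := hex
    exact ⟨s, by simpa using hs, fun {m} _ => trivial⟩
  set t := (Nat.rfind fun s => Part.some (ltb q (B s) (4*s+2))).get hdom with ht
  have htmem : t ∈ Nat.rfind fun s => Part.some (ltb q (B s) (4*s+2)) := Part.get_mem hdom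
  have hlt : q < bv t := by
    have := Nat.rfind_spec htmem
    rw [Part.mem_some_iff] at this
    exact (ltb_bv_iff q t).1 this.symm
  refine ⟨av t, Part.mem_map av htmem, av_lt_alpha t, ?_⟩
  have h1 := key_qs t
  have h2 : (q : ℝ) < bvR t := by unfold bvR; exact_mod_cast hlt
  have h3 : bvR t < betaR := bv_lt_beta t
  have h4 : (alphaR - avR t)^2 ≤ 4 * (betaR - bvR t) := h1
  have h5 : (0:ℝ) < betaR - (q:ℝ) := by linarith
  have : (alphaR - avR t)^2 < 5 * (betaR - (q:ℝ)) := by nlinarith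
  exact this


/-! ### the diagonal argument -/

lemma u_even (s c : ℕ) : u s (2*c+2) = (decide (2*c+2 < 2*s+2) && hB s c) := by
  unfold u
  have h1 : (2*c+2) % 2 = 0 := by omega
  have h2 : (2*c+2)/2 - 1 = c := by omega
  have h3 : 2 ≤ 2*c+2 := by omega
  rw [h1, h2]
  simp [h3]

lemma inW_even_iff (c : Nat.Partrec.Code) :
    inW (2 * Encodable.encode c + 2) ↔ (Nat.Partrec.Code.eval c 0).Dom := by
  constructor
  · rintro ⟨s, hs⟩
    rw [mem_Us, u_even, Bool.and_eq_true] at hs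
    have hb := hs.2
    unfold hB at hb
    rw [Option.isSome_iff_exists] at hb
    obtain ⟨x, hx⟩ := hb
    rw [Denumerable.ofNat_encode] at hx
    exact Part.dom_iff_mem.2 ⟨x, Nat.Partrec.Code.evaln_sound hx⟩
  · intro h
    obtain ⟨x, hx⟩ := Part.dom_iff_mem.1 h
    obtain ⟨k, hk⟩ := Nat.Partrec.Code.evaln_complete.1 hx
    refine ⟨k + (2 * Encodable.encode c + 2), ?_⟩
    rw [mem_Us, u_even, Bool.and_eq_true]
    constructor
    · simp only [decide_eq_true_eq]; omega
    · apply hB_mono (Nat.le_add_right k _)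
      unfold hB
      rw [Denumerable.ofNat_encode, Option.isSome_iff_exists]
      exact ⟨x, hk⟩

def stepF (f : ℚ →. ℚ) : ℕ →. ℕ :=
  fun s => (f (bv s)).bind fun y => Nat.rfind fun t => Part.some (leb y (A t) (2*t+1))

lemma stepF_partrec {f : ℚ →. ℚ} (pf : Partrec f) : Partrec (stepF f) := by
  have hp : Partrec₂ fun (x : ℕ × ℚ) (t : ℕ) =>
      (Part.some (leb x.2 (A t) (2*t+1)) : Part Bool) := by
    have := (leb_av_computable.to₂).partrec₂
    exact this.of_eq fun x => rfl
  have hg : Partrec₂ fun (s : ℕ) (y : ℚ) =>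
      Nat.rfind fun t => Part.some (leb y (A t) (2*t+1)) := by
    have h2 := Partrec.rfind hp
    exact h2.to₂
  exact (pf.comp bv_primrec.to_comp).bind hg

theorem not_SRed_aux (f : ℚ →. ℚ) (d : ℕ) (pf : Partrec f) (hd : 0 < d)
    (H : ∀ q : ℚ, (q : ℝ) < betaR →
      ∃ y ∈ f q, (y : ℝ) < alphaR ∧ alphaR - (y : ℝ) < (d : ℝ) * (betaR - (q : ℝ))) :
    False := by
  have hd1 : (1:ℝ) ≤ (d:ℝ) := by exact_mod_cast hd
  -- choose the witnesses for the approximations of β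
  have hys : ∀ s : ℕ, ∃ y, y ∈ f (bv s) ∧ (y : ℝ) < alphaR ∧
      alphaR - (y : ℝ) < (d : ℝ) * (betaR - ((bv s : ℚ) : ℝ)) := by
    intro s
    obtain ⟨y, h1, h2, h3⟩ := H (bv s) (bv_lt_beta s)
    exact ⟨y, h1, h2, h3⟩
  choose Y hYmem hYlt hYclose using hys
  -- totality of the step function
  have hrfdom : ∀ s : ℕ, (Nat.rfind fun t =>
      Part.some (leb (Y s) (A t) (2*t+1))).Dom := by
    intro s
    have hex : ∃ t, leb (Y s) (A t) (2*t+1) = true := by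
      by_contra hno
      push_neg at hno
      have hlt : ∀ t, av t < Y s := by
        intro t
        have h2 : ¬ (Y s ≤ av t) := fun hle => (hno t) ((leb_av_iff _ _).2 hle)
        exact lt_of_not_ge h2
      have : alphaR ≤ ((Y s : ℚ) : ℝ) := by
        apply alpha_le
        intro t
        have := (hlt t).le
        unfold avR
        exact_mod_cast this
      exact absurd (hYlt s) (not_lt.2 this)
    obtain ⟨t, ht⟩ := hex
    apply Nat.rfind_dom.2
    exact ⟨t, by simpa using ht, fun {m} _ => trivial⟩
  have htot : ∀ s, (stepF f s).Dom := by
    intro s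
    apply Part.dom_iff_mem.2
    refine ⟨(Nat.rfind fun t => Part.some (leb (Y s) (A t) (2*t+1))).get (hrfdom s), ?_⟩
    unfold stepF
    rw [Part.mem_bind_iff]
    exact ⟨Y s, hYmem s, Part.get_mem (hrfdom s)⟩
  set stepT : ℕ → ℕ := fun s => (stepF f s).get (htot s) with hstepT_def
  have hstepT : Computable stepT :=
    Partrec.of_eq_tot (stepF_partrec pf) (fun s => Part.get_mem (htot s))
  -- the key inequality
  have key : ∀ s : ℕ, alphaR - avR (stepT s) < 2 * (d:ℝ) * (alphaR - avR s)^2 := by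
    intro s
    have hmem : stepT s ∈ stepF f s := Part.get_mem (htot s)
    unfold stepF at hmem
    rw [Part.mem_bind_iff] at hmem
    obtain ⟨y', hy'mem, hy'rf⟩ := hmem
    have hyY : y' = Y s := Part.mem_unique hy'mem (hYmem s)
    subst hyY
    have hspec := Nat.rfind_spec hy'rf
    rw [Part.mem_some_iff] at hspec
    have hle : Y s ≤ av (stepT s) := (leb_av_iff _ _).1 hspec.symm
    have hleR : ((Y s : ℚ) : ℝ) ≤ avR (stepT s) := by
      unfold avR; exact_mod_cast hle
    have h1 := hYclose s
    have h2 := key_s s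
    have h3 : (d:ℝ) * (betaR - bvR s) ≤ (d:ℝ) * (2 * (alphaR - avR s)^2) :=
      mul_le_mul_of_nonneg_left h2 (by linarith)
    have h4 : betaR - ((bv s : ℚ) : ℝ) = betaR - bvR s := rfl
    rw [h4] at h1
    nlinarith
  -- starting point
  set ε : ℝ := 1 / (4 * (d:ℝ)) with hεdef
  have hε : 0 < ε := by rw [hεdef]; positivity
  have hε4 : ε ≤ 1/4 := by
    rw [hεdef]
    rw [div_le_div_iff₀ (by linarith) (by norm_num)]
    linarith
  obtain ⟨s₀, hs₀⟩ : ∃ s₀, alphaR - ε < avR s₀ := by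
    have : alphaR - ε < alphaR := by linarith
    exact exists_lt_of_lt_ciSup (by rw [alphaR] at this; exact this)
  set S : ℕ → ℕ := fun k => Nat.rec (motive := fun _ => ℕ) s₀ (fun _ IH => stepT IH) k
    with hSdef
  have hS : Computable S := by
    have := Computable.nat_rec (α := ℕ) (σ := ℕ) (f := fun k => k) (g := fun _ => s₀)
      (h := fun _ p => stepT p.2) Computable.id (Computable.const s₀)
      ((hstepT.comp (Computable.snd.comp Computable.snd)).to₂)
    exact this.of_eq fun k => rfl
  -- the invariant
  have inv : ∀ k, alphaR - avR (S k) < ε * (1/2:ℝ)^k := by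
    intro k
    induction k with
    | zero =>
      simpa using (show alphaR - avR (S 0) < ε from (by linarith : alphaR - avR s₀ < ε))
    | succ k ih =>
      have hSk : S (k+1) = stepT (S k) := rfl
      have hkey := key (S k)
      set e : ℝ := alphaR - avR (S k) with hedef
      set w : ℝ := (1/2:ℝ)^k with hwdef
      have hw0 : 0 < w := by rw [hwdef]; positivity
      have hw1 : w ≤ 1 := by
        rw [hwdef]
        exact pow_le_one₀ (by norm_num) (by norm_num)
      have he0 : 0 < e := by
        rw [hedef]
        have := av_lt_alpha (S k)
        linarith
      have h1 : e^2 < (ε*w)^2 := by nlinarith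
      have h2 : 2*(d:ℝ)*(ε*w)^2 = (ε/2)*w^2 := by
        rw [hεdef]
        field_simp
        ring
      have h3 : (ε/2)*w^2 ≤ (ε/2)*w := by nlinarith
      have h4 : (1/2:ℝ)^(k+1) = w * (1/2) := by rw [hwdef, pow_succ]
      rw [hSk, h4]
      have h5 : alphaR - avR (stepT (S k)) < 2*(d:ℝ)*e^2 := hkey
      have h6 : 2*(d:ℝ)*e^2 < 2*(d:ℝ)*(ε*w)^2 := by nlinarith
      calc alphaR - avR (stepT (S k)) < 2*(d:ℝ)*(ε*w)^2 := by linarith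
        _ = (ε/2)*w^2 := h2
        _ ≤ (ε/2)*w := h3
        _ = ε * (w * (1/2)) := by ring
  -- membership decision
  have hdec : ∀ n, inW n ↔ u (S n) n = true := by
    intro n
    constructor
    · intro hW
      by_contra h'
      have hnot : n ∉ Us (S n) := fun hmem => h' (mem_Us.1 hmem)
      have h1 := alpha_sub_ge hW hnot
      have h2 := inv n
      have h3 : ε * (1/2:ℝ)^n ≤ (1/4) * (1/2:ℝ)^n := by
        apply mul_le_mul_of_nonneg_right hε4 (by positivity)
      have h4 : (0:ℝ) < (1/2:ℝ)^n := by positivity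
      linarith
    · intro h
      exact ⟨S n, mem_Us.2 h⟩
  -- the halting problem is decidable, contradiction
  apply ComputablePred.halting_problem 0
  apply ComputablePred.computable_iff.2
  refine ⟨fun c => u (S (2 * Encodable.encode c + 2)) (2 * Encodable.encode c + 2), ?_, ?_⟩
  · have harg : Computable fun c : Nat.Partrec.Code => 2 * Encodable.encode c + 2 :=
      (Primrec.succ.comp <| Primrec.succ.comp <|
        Primrec.nat_mul.comp (Primrec.const 2) Primrec.encode).to_comp
    exact (u_prim.to_comp).comp (hS.comp harg) harg
  · funext c
    apply propext
    exact ((inW_even_iff c).symm.trans (hdec (2 * Encodable.encode c + 2)))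


end S8

/-- Quasi Solovay reducibility does not imply Solovay reducibility: there are
left-c.e. reals `α ≤_qS β` with `¬ α ≤_S β`. -/
theorem stmt8 : ∃ α β : ℝ, LeftCE α ∧ LeftCE β ∧ QSRed α β ∧ ¬ SRed α β := by
  refine ⟨S8.alphaR, S8.betaR,
    ⟨S8.av, S8.av_primrec.to_comp, S8.av_mono, S8.tendsto_av⟩,
    ⟨S8.bv, S8.bv_primrec.to_comp, S8.bv_mono, S8.tendsto_bv⟩, ?_, ?_⟩
  · refine ⟨S8.QS, S8.QS_partrec, 5, 2, by norm_num, by norm_num, ?_⟩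
    intro q hq
    obtain ⟨y, hmem, hlt, hsq⟩ := S8.QS_spec hq
    refine ⟨y, hmem, hlt, ?_⟩
    have h5 : ((5:ℕ):ℝ) = (5:ℝ) := by norm_num
    rw [h5]
    exact hsq
  · rintro ⟨f, pf, d, hd, H⟩
    exact S8.not_SRed_aux f d pf hd H
end
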